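/- Let x be an observable on a σ-MV-effect algebra E such that x((-∞,t)) is a sharp element of E for every t ∈ ℝ. Then x(A) is sharp for every Borel set A ⊆ ℝ; i.e., x is a sharp observable. -/

import Mathlib

open Set

/-- A σ-complete MV-effect algebra: an MV-algebra (with `⊕`, `¬`, `⊥ = 0`,
`⊤ = 1`) whose natural order is the given lattice order and in which every
countable subset has a supremum and an infimum (given by `sSup`/`sInf`). -/
class SigmaMVEffectAlgebra (E : Type*) extends
    Lattice E, BoundedOrder E, SupSet E, InfSet E where
  oplus : E → E → E
  neg : E → E
  oplus_assoc : ∀ a b c : E, oplus (oplus a b) c = oplus a (oplus b c)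
  oplus_comm : ∀ a b : E, oplus a b = oplus b a
  oplus_bot : ∀ a : E, oplus a ⊥ = a
  neg_neg : ∀ a : E, neg (neg a) = a
  oplus_top : ∀ a : E, oplus a ⊤ = ⊤
  neg_bot : neg (⊥ : E) = ⊤
  luk : ∀ a b : E, oplus (neg (oplus (neg a) b)) b = oplus (neg (oplus (neg b) a)) a
  le_iff_oplus : ∀ a b : E, a ≤ b ↔ oplus (neg a) b = ⊤
  isLUB_sSup : ∀ s : Set E, s.Countable → IsLUB s (sSup s)
  isGLB_sInf : ∀ s : Set E, s.Countable → IsGLB s (sInf s)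

namespace SigmaMVEffectAlgebra

variable {E : Type*} [SigmaMVEffectAlgebra E]

open Classical in
/-- The partial effect-algebra addition of the MV-effect algebra:
`a + b` is defined iff `a ≤ b'`, and then `a + b = a ⊕ b`. -/
noncomputable def padd (a b : E) : Option E :=
  if a ≤ neg b then some (oplus a b) else none

/-- An observable on `E`: a `σ`-homomorphism from the Borel σ-algebra of `ℝ`
into `E`. -/
structure Observable (E : Type*) [SigmaMVEffectAlgebra E] where
  toFun : Set ℝ → E
  total : toFun Set.univ = ⊤
  additive : ∀ A B : Set ℝ, MeasurableSet A → MeasurableSet B → Disjoint A B →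
    padd (toFun A) (toFun B) = some (toFun (A ∪ B))
  cont : ∀ A : ℕ → Set ℝ, (∀ n, MeasurableSet (A n)) → Monotone A →
    IsLUB (Set.range fun n => toFun (A n)) (toFun (⋃ n, A n))

/-- An observable is bounded if `x([α,β]) = 1` for some interval. -/
def Observable.Bounded (x : Observable E) : Prop :=
  ∃ α β : ℝ, x.toFun (Set.Icc α β) = ⊤

/-- The spectral resolution `B_x(t) = x((-∞,t))` of an observable. -/
def spec (x : Observable E) (t : ℝ) : E := x.toFun (Set.Iio t)

end SigmaMVEffectAlgebra

namespace SigmaMVEffectAlgebraAux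

open SigmaMVEffectAlgebra

variable {E : Type*} [SigmaMVEffectAlgebra E]

local infixl:65 " ⊹ " => (oplus : E → E → E)
local prefix:max "∼" => (neg : E → E)

theorem nneg (a : E) : ∼∼a = a := SigmaMVEffectAlgebra.neg_neg a
theorem nbot : ∼(⊥ : E) = ⊤ := SigmaMVEffectAlgebra.neg_bot

theorem neg_top : (∼(⊤ : E)) = ⊥ := by
  rw [← nbot, nneg]

theorem oplus_neg_self (a : E) : ∼a ⊹ a = ⊤ :=
  (le_iff_oplus a a).1 le_rfl

theorem le_oplus_right (a b : E) : b ≤ a ⊹ b := by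
  rw [le_iff_oplus, ← oplus_assoc, oplus_comm (∼b) a, oplus_assoc, oplus_neg_self, oplus_top]

theorem le_oplus_left (a b : E) : a ≤ a ⊹ b := by
  rw [oplus_comm]; exact le_oplus_right b a

theorem oplus_sub_of_le {a b : E} (h : a ≤ b) : a ⊹ ∼(∼b ⊹ a) = b := by
  rw [oplus_comm, luk b a, (le_iff_oplus a b).1 h, neg_top, oplus_comm, oplus_bot]

theorem exists_oplus_of_le {a b : E} (h : a ≤ b) : ∃ c : E, a ⊹ c = b :=
  ⟨_, oplus_sub_of_le h⟩

theorem oplus_le_oplus_left {a b : E} (c : E) (h : a ≤ b) : c ⊹ a ≤ c ⊹ b := by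
  obtain ⟨d, rfl⟩ := exists_oplus_of_le h
  rw [← oplus_assoc]
  exact le_oplus_left _ _

theorem oplus_le_oplus_right {a b : E} (c : E) (h : a ≤ b) : a ⊹ c ≤ b ⊹ c := by
  rw [oplus_comm a c, oplus_comm b c]; exact oplus_le_oplus_left c h

theorem neg_le_neg {a b : E} (h : a ≤ b) : ∼b ≤ ∼a := by
  rw [le_iff_oplus, nneg, oplus_comm]
  exact (le_iff_oplus a b).1 h

theorem le_neg_comm {a b : E} (h : a ≤ ∼b) : b ≤ ∼a := by
  have := neg_le_neg h; rwa [nneg] at this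

theorem sup_eq (a b : E) : a ⊔ b = ∼(∼a ⊹ b) ⊹ b := by
  apply le_antisymm
  · apply sup_le
    · rw [luk]; exact le_oplus_right _ _
    · exact le_oplus_right _ _
  · calc ∼(∼a ⊹ b) ⊹ b ≤ ∼(∼(a ⊔ b) ⊹ b) ⊹ b := by
          apply oplus_le_oplus_right
          exact neg_le_neg (oplus_le_oplus_right _ (neg_le_neg le_sup_left))
      _ = a ⊔ b := by
          rw [oplus_comm]; exact oplus_sub_of_le le_sup_right

theorem inf_eq (a b : E) : a ⊓ b = ∼(∼a ⊔ ∼b) := by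
  apply le_antisymm
  · exact le_neg_comm (sup_le (neg_le_neg inf_le_left) (neg_le_neg inf_le_right))
  · apply le_inf
    · have := neg_le_neg (le_sup_left (a := ∼a) (b := ∼b)); rwa [nneg] at this
    · have := neg_le_neg (le_sup_right (a := ∼a) (b := ∼b)); rwa [nneg] at this

/-- sharpness -/
def Sharp (a : E) : Prop := a ⊓ ∼a = ⊥

theorem sharp_neg {a : E} (h : Sharp a) : Sharp (∼a) := by
  unfold Sharp at *
  rwa [nneg, inf_comm]

theorem sharp_iff_oplus_idem {a : E} : Sharp a ↔ a ⊹ a = a := by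
  unfold Sharp
  rw [inf_eq, nneg, sup_eq, nneg]
  constructor
  · intro hb
    have h2 : ∼(a ⊹ a) ⊹ a = ⊤ := by
      have := congrArg (∼·) hb
      simpa [nneg, nbot] using this
    exact le_antisymm ((le_iff_oplus _ _).2 h2) (le_oplus_left _ _)
  · intro hi
    rw [hi, oplus_neg_self, neg_top]

local notation:70 a " ⊙ " b => ∼(∼a ⊹ ∼b)

theorem otimes_le_otimes {a b c d : E} (h1 : a ≤ b) (h2 : c ≤ d) : (a ⊙ c) ≤ b ⊙ d := by
  apply neg_le_neg
  calc ∼b ⊹ ∼d ≤ ∼a ⊹ ∼d := oplus_le_oplus_right _ (neg_le_neg h1)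
    _ ≤ ∼a ⊹ ∼c := oplus_le_oplus_left _ (neg_le_neg h2)

theorem otimes_le_right (a b : E) : (a ⊙ b) ≤ b := by
  calc (a ⊙ b) ≤ (⊤ : E) ⊙ b := otimes_le_otimes le_top le_rfl
    _ = b := by rw [neg_top, oplus_comm, oplus_bot, nneg]

theorem sharp_iff_otimes_idem {a : E} : Sharp a ↔ (a ⊙ a) = a := by
  constructor
  · intro h
    have h1 := (sharp_iff_oplus_idem).1 (sharp_neg h)
    have h2 := congrArg (∼·) h1
    simpa [nneg] using h2
  · intro h
    have h' : ∼a ⊹ ∼a = ∼a := by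
      have h2 := congrArg (∼·) h
      rw [nneg] at h2
      exact h2
    have h3 := sharp_neg ((sharp_iff_oplus_idem).2 h')
    rwa [nneg] at h3

theorem sharp_of_isLUB {f : ℕ → E} {u : E} (hu : IsLUB (Set.range f) u)
    (hf : ∀ n, Sharp (f n)) : Sharp u := by
  rw [sharp_iff_otimes_idem]
  apply le_antisymm (otimes_le_right u u)
  apply hu.2
  rintro y ⟨n, rfl⟩
  calc f n = (f n) ⊙ (f n) := ((sharp_iff_otimes_idem).1 (hf n)).symm
    _ ≤ (u ⊙ u) := otimes_le_otimes (hu.1 ⟨n, rfl⟩) (hu.1 ⟨n, rfl⟩)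

theorem sharp_oplus {a b : E} (ha : Sharp a) (hb : Sharp b) : Sharp (a ⊹ b) := by
  rw [sharp_iff_oplus_idem] at *
  calc (a ⊹ b) ⊹ (a ⊹ b) = (a ⊹ a) ⊹ (b ⊹ b) := by
        rw [oplus_assoc, oplus_assoc, ← oplus_assoc b a b, oplus_comm b a, oplus_assoc]
    _ = a ⊹ b := by rw [ha, hb]

end SigmaMVEffectAlgebraAux

open SigmaMVEffectAlgebra SigmaMVEffectAlgebraAux in
/-- If an observable `x` on a σ-MV-effect algebra has `x((-∞,t))` sharp
(`b ∧ b' = 0`) for every `t ∈ ℝ`, then `x(A)` is sharp for every Borel set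
`A`; i.e. `x` is a sharp observable. -/
theorem sharp_spectral_resolution_implies_sharp_observable
    {E : Type*} [SigmaMVEffectAlgebra E] (x : Observable E)
    (h : ∀ t : ℝ, x.toFun (Set.Iio t) ⊓ neg (x.toFun (Set.Iio t)) = ⊥) :
    ∀ A : Set ℝ, MeasurableSet A → x.toFun A ⊓ neg (x.toFun A) = ⊥ := by
  classical
  have hadd : ∀ A B : Set ℝ, MeasurableSet A → MeasurableSet B → Disjoint A B →
      x.toFun A ≤ neg (x.toFun B) ∧
        oplus (x.toFun A) (x.toFun B) = x.toFun (A ∪ B) := by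
    intro A B hA hB hAB
    have hp := x.additive A B hA hB hAB
    unfold padd at hp
    split_ifs at hp with hle
    exact ⟨hle, Option.some_injective _ hp⟩
  have hempty : x.toFun (∅ : Set ℝ) = ⊥ := by
    obtain ⟨hle, -⟩ := hadd ∅ Set.univ MeasurableSet.empty MeasurableSet.univ
      (Set.disjoint_left.2 (by simp))
    rw [x.total, neg_top] at hle
    exact le_bot_iff.1 hle
  have hcompl : ∀ A : Set ℝ, MeasurableSet A → x.toFun Aᶜ = neg (x.toFun A) := by
    intro A hA
    obtain ⟨hle, hsum⟩ := hadd A Aᶜ hA hA.compl disjoint_compl_right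
    rw [Set.union_compl_self, x.total] at hsum
    refine le_antisymm (le_neg_comm hle) ?_
    rw [le_iff_oplus, nneg]
    exact hsum
  have heq : (inferInstance : MeasurableSpace ℝ)
      = MeasurableSpace.generateFrom (Set.range Set.Iio) :=
    BorelSpace.measurable_eq.trans (borel_eq_generateFrom_Iio ℝ)
  intro A hA
  refine MeasurableSpace.induction_on_inter (C := fun A _ => Sharp (x.toFun A))
    heq isPiSystem_Iio ?_ ?_ ?_ ?_ A hA
  · show Sharp (x.toFun ∅)
    unfold Sharp
    rw [hempty]
    simp
  · rintro t ⟨s, rfl⟩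
    exact h s
  · intro t ht hC
    show Sharp (x.toFun tᶜ)
    rw [hcompl t ht]
    exact sharp_neg hC
  · intro f hdisj hmeas hC
    have hgmeas : ∀ n, MeasurableSet (Set.accumulate f n) := by
      intro n
      rw [Set.accumulate_def]
      exact MeasurableSet.biUnion (Set.to_countable _) fun b _ => hmeas b
    have hsharp : ∀ n, Sharp (x.toFun (Set.accumulate f n)) := by
      intro n
      induction n with
      | zero =>
        have : Set.accumulate f 0 = f 0 := by
          ext z; simp [Set.mem_accumulate, Nat.le_zero]
        rw [this]; exact hC 0
      | succ n ih =>
        have hstep : Set.accumulate f (n + 1) = Set.accumulate f n ∪ f (n + 1) := by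
          ext z
          simp only [Set.mem_accumulate, Set.mem_union]
          constructor
          · rintro ⟨y, hy, hz⟩
            rcases Nat.lt_or_ge y (n + 1) with h' | h'
            · exact Or.inl ⟨y, by omega, hz⟩
            · exact Or.inr (by rwa [show y = n + 1 by omega] at hz)
          · rintro (⟨y, hy, hz⟩ | hz)
            · exact ⟨y, by omega, hz⟩
            · exact ⟨n + 1, le_rfl, hz⟩
        have hdisj' : Disjoint (Set.accumulate f n) (f (n + 1)) := by
          rw [Set.accumulate_def]
          refine Set.disjoint_left.2 ?_
          intro z hz hz'
          rcases Set.mem_iUnion₂.1 hz with ⟨y, hy, hzy⟩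
          exact Set.disjoint_left.1 (hdisj (show y ≠ n + 1 by omega)) hzy hz'
        obtain ⟨-, hsum⟩ := hadd _ _ (hgmeas n) (hmeas (n + 1)) hdisj'
        rw [hstep, ← hsum]
        exact sharp_oplus ih (hC (n + 1))
    have hlub := x.cont (Set.accumulate f) hgmeas Set.monotone_accumulate
    rw [Set.iUnion_accumulate] at hlub
    show Sharp (x.toFun (⋃ i, f i))
    exact sharp_of_isLUB hlub hsharp
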